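/- Let S be a finite basis-complete set of nonzero vectors in EuclideanSpace ℝ (Fin 3) such that every maximal orthogonal subset of S has exactly 3 elements, and suppose S is a Kochen–Specker set: there is no g : S → Bool such that every maximal orthogonal subset of S contains exactly one element with g = true. Let f assign to every v ∈ S a projector f(v) ∈ M₃(ℝ) (f(v)ᵀ = f(v) and f(v) * f(v) = f(v)) such that f(v) * f(w) = 0 for all distinct orthogonal v, w ∈ S, and Σ_{v ∈ C} f(v) = 1 for every maximal orthogonal subset C of S. Then there exists a maximal orthogonal subset C of S such that rank(f(v)) = 1 for every v ∈ C. -/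

import Mathlib

open Matrix

/-- A finite set of vectors is basis-complete if it is the union of a family of
orthonormal bases of ℝ³. -/
def BasisComplete (S : Finset (EuclideanSpace ℝ (Fin 3))) : Prop :=
  ∃ (I : Type) (b : I → OrthonormalBasis (Fin 3) ℝ (EuclideanSpace ℝ (Fin 3))),
    (S : Set (EuclideanSpace ℝ (Fin 3))) = ⋃ i, Set.range (b i)

/-- A finite set of vectors is pairwise orthogonal if its elements are nonzero
and mutually orthogonal. -/
def PairwiseOrtho (C : Finset (EuclideanSpace ℝ (Fin 3))) : Prop :=
  (∀ v ∈ C, v ≠ 0) ∧ ∀ v ∈ C, ∀ w ∈ C, v ≠ w → (inner ℝ v w : ℝ) = 0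

/-- C is a maximal orthogonal subset of S: C ⊆ S is pairwise orthogonal and not
properly contained in any pairwise orthogonal subset of S. -/
def MaxOrtho (S C : Finset (EuclideanSpace ℝ (Fin 3))) : Prop :=
  C ⊆ S ∧ PairwiseOrtho C ∧
    ∀ C', C ⊆ C' → C' ⊆ S → PairwiseOrtho C' → C' = C

lemma trace_eq_rank_of_idem (A : Matrix (Fin 3) (Fin 3) ℝ) (h : A * A = A) :
    A.trace = (A.rank : ℝ) := by
  have hf : A.mulVecLin ∘ₗ A.mulVecLin = A.mulVecLin := by
    rw [← Matrix.mulVecLin_mul, h]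
  obtain ⟨p, hp⟩ := (LinearMap.isProj_iff_isIdempotentElem _).mpr hf
  have hrange : p = LinearMap.range A.mulVecLin := by
    apply le_antisymm
    · intro x hx
      exact ⟨x, hp.map_id x hx⟩
    · rintro x ⟨y, rfl⟩
      exact hp.map_mem y
  have htr := hp.trace
  rw [LinearMap.trace_eq_matrix_trace ℝ (Pi.basisFun ℝ (Fin 3)),
    LinearMap.toMatrix_eq_toMatrix', ← Matrix.toLin'_apply', LinearMap.toMatrix'_toLin'] at htr
  rw [htr, Matrix.rank, ← hrange]


/-- For a basis-complete Kochen–Specker set S in ℝ³, any assignment of real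
projectors respecting orthogonality whose sums over maximal orthogonal subsets
are the identity must assign only rank-1 projectors on some maximal orthogonal
subset. -/
theorem kochenSpecker_rank_one_triple
    (S : Finset (EuclideanSpace ℝ (Fin 3)))
    (hnz : ∀ v ∈ S, v ≠ 0)
    (hbc : BasisComplete S)
    (hcard : ∀ C, MaxOrtho S C → C.card = 3)
    (hks : ¬ ∃ g : EuclideanSpace ℝ (Fin 3) → Bool,
      ∀ C, MaxOrtho S C → ∃! v, v ∈ C ∧ g v = true)
    (f : EuclideanSpace ℝ (Fin 3) → Matrix (Fin 3) (Fin 3) ℝ)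
    (hproj : ∀ v ∈ S, (f v)ᵀ = f v ∧ f v * f v = f v)
    (horth : ∀ v ∈ S, ∀ w ∈ S, v ≠ w → (inner ℝ v w : ℝ) = 0 → f v * f w = 0)
    (hsum : ∀ C, MaxOrtho S C → ∑ v ∈ C, f v = 1) :
    ∃ C, MaxOrtho S C ∧ ∀ v ∈ C, (f v).rank = 1 := by
  classical
  by_contra hcon
  push_neg at hcon
  -- rank sum lemma
  have hranksum : ∀ C, MaxOrtho S C → ∑ v ∈ C, (f v).rank = 3 := by
    intro C hC
    have h1 : (((∑ v ∈ C, (f v).rank : ℕ)) : ℝ) = 3 := by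
      push_cast
      have : ∑ v ∈ C, ((f v).rank : ℝ) = ∑ v ∈ C, (f v).trace := by
        refine Finset.sum_congr rfl fun v hv => ?_
        exact (trace_eq_rank_of_idem (f v) (hproj v (hC.1 hv)).2).symm
      rw [this, ← Matrix.trace_sum, hsum C hC, Matrix.trace_one]
      norm_num
    exact_mod_cast h1
  apply hks
  refine ⟨fun v => decide (2 ≤ (f v).rank), fun C hC => ?_⟩
  have hs3 := hranksum C hC
  have hc3 := hcard C hC
  obtain ⟨v₀, hv₀, hr₀⟩ := hcon C hC
  -- existence of an element with rank ≥ 2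
  have hex : ∃ v ∈ C, 2 ≤ (f v).rank := by
    by_contra hno
    push_neg at hno
    have hle : ∀ v ∈ C, (f v).rank ≤ 1 := fun v hv => Nat.lt_succ_iff.mp (hno v hv)
    have hr0 : (f v₀).rank = 0 := by
      have := hle v₀ hv₀
      omega
    have hle2 : ∑ v ∈ C, (f v).rank ≤ 2 := by
      rw [← Finset.add_sum_erase C _ hv₀, hr0, zero_add]
      calc ∑ v ∈ C.erase v₀, (f v).rank
          ≤ ∑ v ∈ C.erase v₀, 1 :=
            Finset.sum_le_sum fun v hv => hle v (Finset.mem_of_mem_erase hv)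
        _ = (C.erase v₀).card := by simp
        _ = 2 := by rw [Finset.card_erase_of_mem hv₀, hc3]
    omega
  obtain ⟨v, hv, hv2⟩ := hex
  refine ⟨v, ⟨hv, by simpa using hv2⟩, ?_⟩
  rintro w ⟨hw, hgw⟩
  have hw2 : 2 ≤ (f w).rank := by simpa using hgw
  by_contra hne
  have hsub : {w, v} ⊆ C := by
    intro x hx
    simp only [Finset.mem_insert, Finset.mem_singleton] at hx
    rcases hx with rfl | rfl <;> assumption
  have h4 : 4 ≤ ∑ x ∈ ({w, v} : Finset _), (f x).rank := by
    rw [Finset.sum_insert (by simpa using hne), Finset.sum_singleton]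
    omega
  have hle' : ∑ x ∈ ({w, v} : Finset _), (f x).rank ≤ ∑ x ∈ C, (f x).rank :=
    Finset.sum_le_sum_of_subset hsub
  omega
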